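/- For every n ≥ 2 and every I ⊆ α(ℓ(n)) with card(I) = n − 2^{ℓ(n)}, the distortion error of the set α_n(I) satisfies ∫ min_{a ∈ α_n(I)} (x − a)² dP(x) = (1/18^{ℓ(n)}) · (1/8) · (2^{ℓ(n)+1} − n + (1/9)(n − 2^{ℓ(n)})). -/

import Mathlib

open MeasureTheory Set
open scoped ENNReal

noncomputable section

/-- The similarity map `S_j(x) = x/3^j + 1 - 1/3^(j-1)`. -/
def Smap (j : ℕ) (x : ℝ) : ℝ := x / 3 ^ j + 1 - 1 / 3 ^ (j - 1)

/-- The similarity ratio `s_j = 3^(-j)`. -/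
def srat (j : ℕ) : ℝ := (3 : ℝ)⁻¹ ^ j

/-- The probability `p_j = 2^(-j)`. -/
def prob (j : ℕ) : ℝ := (2 : ℝ)⁻¹ ^ j

/-- `J_j = S_j([0,1])`. -/
def Jset (j : ℕ) : Set ℝ := Smap j '' Set.Icc 0 1

/-- For a word `ω = ω₁⋯ω_n`, `S_ω = S_{ω₁} ∘ ⋯ ∘ S_{ω_n}`. -/
def Sword : List ℕ → ℝ → ℝ
  | [] => id
  | j :: ω => Smap j ∘ Sword ω

/-- `s_ω = s_{ω₁} ⋯ s_{ω_n}`. -/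
def sword (ω : List ℕ) : ℝ := (ω.map srat).prod

/-- `p_ω = p_{ω₁} ⋯ p_{ω_n}`. -/
def pword (ω : List ℕ) : ℝ := (ω.map prob).prod

/-- `J_ω = S_ω([0,1])`. -/
def Jword (ω : List ℕ) : Set ℝ := Sword ω '' Set.Icc 0 1

/-- `ω⁻(ω_{|ω|} + j)` : the word obtained from `ω` by increasing its last letter by `j`. -/
def wordInc (ω : List ℕ) (j : ℕ) : List ℕ := ω.dropLast ++ [ω.getLastD 1 + j]

/-- `a(ω) = S_ω(1/2)`. -/
def aw (ω : List ℕ) : ℝ := Sword ω (1 / 2)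

/-- `a(ω, ∞) = S_{ω⁻(ω_{|ω|}+1)}(1/2) + s_{ω⁻(ω_{|ω|}+1)}`. -/
def awInf (ω : List ℕ) : ℝ := Sword (wordInc ω 1) (1 / 2) + sword (wordInc ω 1)

/-- `J_{(ω,∞)} = ⋃_{j ≥ 1} J_{ω⁻(ω_{|ω|}+j)}`. -/
def JwordInf (ω : List ℕ) : Set ℝ := ⋃ j : ℕ, Jword (wordInc ω (j + 1))

/-- A (nonempty) word over the alphabet `ℕ = {1, 2, 3, …}`. -/
def IsWord (ω : List ℕ) : Prop := ω ≠ [] ∧ ∀ i ∈ ω, 1 ≤ i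

/-- The self-similarity equation `P = ∑_{j=1}^∞ 2^{-j} · P ∘ S_j^{-1}`. -/
def SelfSim (P : Measure ℝ) : Prop :=
  P = Measure.sum fun j : ℕ => ((2 : ℝ≥0∞) ^ (j + 1))⁻¹ • P.map (Smap (j + 1))

/-- The distortion error `∫ min_{a ∈ A} (x - a)² dP(x)` of a set `A` of points. -/
def err (P : Measure ℝ) (A : Set ℝ) : ℝ :=
  ∫ x, sInf ((fun a => (x - a) ^ 2) '' A) ∂P

/-- The `n`-th quantization error. -/
def quantErr (P : Measure ℝ) (n : ℕ) : ℝ :=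
  sInf {v | ∃ A : Set ℝ, A.Finite ∧ A.Nonempty ∧ A.ncard ≤ n ∧ v = err P A}

/-- An optimal set of `n`-means. -/
def IsOptimal (P : Measure ℝ) (n : ℕ) (A : Set ℝ) : Prop :=
  A.Finite ∧ A.Nonempty ∧ A.ncard ≤ n ∧ err P A = quantErr P n

/-- The Voronoi region of `a` with respect to `A`. -/
def voronoi (A : Set ℝ) (a : ℝ) : Set ℝ := {x | ∀ b ∈ A, |x - a| ≤ |x - b|}

/-- `α(ℓ) = {a(ω) : p_ω = 2^{-ℓ}} ∪ {a(ω,∞) : p_ω = 2^{-ℓ}}`. -/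
def alphaSet (l : ℕ) : Set ℝ :=
  {x | ∃ ω : List ℕ, IsWord ω ∧ pword ω = (2 : ℝ)⁻¹ ^ l ∧ (x = aw ω ∨ x = awInf ω)}

/-- The set `α_n(I)` built from `α(ℓ)` and `I ⊆ α(ℓ)`. -/
def alphaNI (l : ℕ) (I : Set ℝ) : Set ℝ :=
  (alphaSet l \ I)
    ∪ {x | ∃ ω : List ℕ, IsWord ω ∧ pword ω = (2 : ℝ)⁻¹ ^ l ∧ aw ω ∈ I ∧
        (x = aw (ω ++ [1]) ∨ x = awInf (ω ++ [1]))}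
    ∪ {x | ∃ ω : List ℕ, IsWord ω ∧ pword ω = (2 : ℝ)⁻¹ ^ l ∧ awInf ω ∈ I ∧
        (x = aw (wordInc ω 1) ∨ x = awInf (wordInc ω 1))}

/-- binary maps: `ub false x = x/3`, `ub true x = x/3 + 2/3`. -/
def ub (b : Bool) (x : ℝ) : ℝ := x / 3 + if b then 2/3 else 0

def Uw (σ : List Bool) : ℝ → ℝ := σ.foldr (fun b f => ub b ∘ f) id

@[simp] lemma Uw_nil : Uw [] = id := rfl
@[simp] lemma Uw_cons (b : Bool) (σ : List Bool) : Uw (b :: σ) = ub b ∘ Uw σ := rfl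

def midp (σ : List Bool) : ℝ := Uw σ (1/2)

def Bls : ℕ → Finset (List Bool)
  | 0 => {[]}
  | l+1 => ((Bls l).image (List.cons false)) ∪ ((Bls l).image (List.cons true))

lemma Bls_zero : Bls 0 = {[]} := rfl
lemma Bls_succ (l : ℕ) :
    Bls (l+1) = ((Bls l).image (List.cons false)) ∪ ((Bls l).image (List.cons true)) := rfl

lemma ub_cont (b : Bool) : Continuous (ub b) := by
  unfold ub; fun_prop

lemma Uw_cont (σ : List Bool) : Continuous (Uw σ) := by
  induction σ with
  | nil => exact continuous_id
  | cons b σ ih => rw [Uw_cons]; exact (ub_cont b).comp ih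

lemma Uw_append (σ τ : List Bool) (x : ℝ) : Uw (σ ++ τ) x = Uw σ (Uw τ x) := by
  induction σ with
  | nil => rfl
  | cons b σ ih => simp only [List.cons_append, Uw_cons, Function.comp_apply, ih]

lemma ub_mem (b : Bool) {x : ℝ} (hx : x ∈ Set.Icc (0:ℝ) 1) : ub b x ∈ Set.Icc (0:ℝ) 1 := by
  rcases hx with ⟨h0, h1⟩
  cases b <;> simp only [ub, if_true, if_false] <;> constructor <;> norm_num <;> linarith

lemma Uw_mem (σ : List Bool) {x : ℝ} (hx : x ∈ Set.Icc (0:ℝ) 1) :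
    Uw σ x ∈ Set.Icc (0:ℝ) 1 := by
  induction σ with
  | nil => exact hx
  | cons b σ ih => simp only [Uw_cons, Function.comp_apply]; exact ub_mem b ih

lemma ub_sub (b : Bool) (x y : ℝ) : ub b x - ub b y = (x - y) / 3 := by
  cases b <;> simp [ub] <;> ring

lemma Uw_sub (σ : List Bool) (x y : ℝ) :
    Uw σ x - Uw σ y = (3:ℝ)⁻¹ ^ σ.length * (x - y) := by
  induction σ with
  | nil => simp
  | cons b σ ih =>
    simp only [Uw_cons, Function.comp_apply, List.length_cons, ub_sub, ih, pow_succ]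
    ring

lemma ub_sep {b c : Bool} (hbc : b ≠ c) {x y : ℝ} (hx : x ∈ Set.Icc (0:ℝ) 1)
    (hy : y ∈ Set.Icc (0:ℝ) 1) : (3:ℝ)⁻¹ ≤ |ub b x - ub c y| := by
  rcases hx with ⟨hx0, hx1⟩; rcases hy with ⟨hy0, hy1⟩
  cases b <;> cases c
  · exact absurd rfl hbc
  · have h : ub false x - ub true y = -(y/3 + 2/3 - x/3) := by simp [ub]
    rw [h, abs_neg, abs_of_nonneg (by linarith)]; linarith
  · have h : ub true x - ub false y = x/3 + 2/3 - y/3 := by simp [ub]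
    rw [h, abs_of_nonneg (by linarith)]; linarith
  · exact absurd rfl hbc

lemma Uw_sep {σ : List Bool} : ∀ {τ : List Bool}, σ.length = τ.length → σ ≠ τ →
    ∀ {x y : ℝ}, x ∈ Set.Icc (0:ℝ) 1 → y ∈ Set.Icc (0:ℝ) 1 →
    (3:ℝ)⁻¹ ^ σ.length ≤ |Uw σ x - Uw τ y| := by
  induction σ with
  | nil =>
    intro τ hlen hne _ _ _ _
    cases τ with
    | nil => exact absurd rfl hne
    | cons c τ => simp at hlen
  | cons b σ ih =>
    intro τ hlen hne x y hx hy
    cases τ with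
    | nil => simp at hlen
    | cons c τ =>
      simp only [List.length_cons, Nat.succ_inj] at hlen
      simp only [Uw_cons, Function.comp_apply, List.length_cons]
      by_cases hbc : b = c
      · subst hbc
        have hστ : σ ≠ τ := fun h => hne (by rw [h])
        have key := ih hlen hστ hx hy
        have h3 : ub b (Uw σ x) - ub b (Uw τ y) = (Uw σ x - Uw τ y) / 3 := ub_sub _ _ _
        rw [h3, abs_div, abs_of_nonneg (by norm_num : (0:ℝ) ≤ 3), pow_succ]
        nlinarith [abs_nonneg (Uw σ x - Uw τ y)]
      · have h1 := ub_sep hbc (Uw_mem σ hx) (Uw_mem τ hy)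
        calc (3:ℝ)⁻¹ ^ (σ.length + 1) ≤ (3:ℝ)⁻¹ ^ 1 :=
              pow_le_pow_of_le_one (by norm_num) (by norm_num) (by omega)
          _ = (3:ℝ)⁻¹ := pow_one _
          _ ≤ _ := h1

lemma half_mem : (1/2 : ℝ) ∈ Set.Icc (0:ℝ) 1 := by norm_num

lemma midp_inj {σ τ : List Bool} (hlen : σ.length = τ.length) (h : midp σ = midp τ) :
    σ = τ := by
  by_contra hne
  have h2 := Uw_sep hlen hne half_mem half_mem
  rw [show Uw σ (1/2) = midp σ from rfl, show Uw τ (1/2) = midp τ from rfl, h] at h2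
  simp only [sub_self, abs_zero] at h2
  have : (0:ℝ) < (3:ℝ)⁻¹ ^ σ.length := by positivity
  exact absurd h2 this.not_ge

lemma Bls_mem {l : ℕ} {σ : List Bool} : σ ∈ Bls l ↔ σ.length = l := by
  induction l generalizing σ with
  | zero => simp [Bls_zero, List.length_eq_zero_iff]
  | succ l ih =>
    rw [Bls_succ]
    simp only [Finset.mem_union, Finset.mem_image]
    constructor
    · rintro (⟨τ, hτ, rfl⟩ | ⟨τ, hτ, rfl⟩) <;> simp [ih.mp hτ]
    · intro h
      match σ with
      | b :: τ =>
        simp only [List.length_cons, Nat.succ_inj] at h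
        cases b
        · exact Or.inl ⟨τ, ih.mpr h, rfl⟩
        · exact Or.inr ⟨τ, ih.mpr h, rfl⟩

lemma Bls_card (l : ℕ) : (Bls l).card = 2 ^ l := by
  induction l with
  | zero => simp [Bls_zero]
  | succ l ih =>
    rw [Bls_succ, Finset.card_union_of_disjoint, Finset.card_image_of_injective _
        (fun a b h => by simpa using h),
      Finset.card_image_of_injective _ (fun a b h => by simpa using h), ih, pow_succ]
    · ring
    · rw [Finset.disjoint_left]
      rintro σ hσ hσ'
      simp only [Finset.mem_image] at hσ hσ'
      obtain ⟨τ, _, rfl⟩ := hσ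
      obtain ⟨κ, _, h⟩ := hσ'
      simp at h
/-! ### Word-level lemmas -/

@[simp] lemma Sword_nil : Sword [] = id := rfl
@[simp] lemma Sword_cons (j : ℕ) (ω : List ℕ) : Sword (j :: ω) = Smap j ∘ Sword ω := rfl

lemma Sword_append (ω τ : List ℕ) (x : ℝ) : Sword (ω ++ τ) x = Sword ω (Sword τ x) := by
  induction ω with
  | nil => rfl
  | cons j ω ih => simp only [List.cons_append, Sword_cons, Function.comp_apply, ih]

@[simp] lemma sword_nil : sword [] = 1 := rfl
lemma sword_cons (j : ℕ) (ω : List ℕ) : sword (j :: ω) = srat j * sword ω := by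
  simp [sword]

@[simp] lemma pword_nil : pword [] = 1 := rfl
lemma pword_cons (j : ℕ) (ω : List ℕ) : pword (j :: ω) = prob j * pword ω := by
  simp [pword]

lemma pword_eq (ω : List ℕ) : pword ω = (2:ℝ)⁻¹ ^ ω.sum := by
  induction ω with
  | nil => simp
  | cons j ω ih => rw [pword_cons, ih, List.sum_cons, pow_add]; rfl

lemma smap_affine (j : ℕ) (x c : ℝ) : Smap j (x + c) = Smap j x + srat j * c := by
  simp only [Smap, srat]
  rw [inv_pow]
  field_simp
  ring

lemma Sword_affine (ω : List ℕ) (x c : ℝ) : Sword ω (x + c) = Sword ω x + sword ω * c := by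
  induction ω with
  | nil => simp
  | cons j ω ih =>
    simp only [Sword_cons, Function.comp_apply, ih, smap_affine, sword_cons]
    ring

lemma smap_one : Smap 1 = ub false := by
  funext x; simp [Smap, ub]

lemma smap_succ (j : ℕ) (hj : 1 ≤ j) : Smap (j + 1) = ub true ∘ Smap j := by
  funext x
  obtain ⟨m, rfl⟩ := Nat.exists_eq_add_of_le hj
  simp only [Smap, ub, Function.comp_apply, if_true]
  have h1 : 1 + m + 1 - 1 = m + 1 := by omega
  have h2 : 1 + m - 1 = m := by omega
  rw [h1, h2]
  have h3 : (3:ℝ) ^ (m+1) ≠ 0 := by positivity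
  have h4 : (3:ℝ) ^ m ≠ 0 := by positivity
  have h5 : (3:ℝ) ^ (1 + m + 1) = 3 ^ (m + 1) * 3 := by ring
  have h6 : (3:ℝ) ^ (1 + m) = 3 ^ m * 3 := by ring
  rw [h5, h6, pow_succ]
  field_simp
  ring

lemma smap_enc (m : ℕ) : Smap (m + 1) = Uw (List.replicate m true ++ [false]) := by
  induction m with
  | zero => simpa [smap_one] using (by funext x; rfl : ub false = Uw [false])
  | succ m ih =>
    rw [smap_succ (m+1) (by omega), ih, List.replicate_succ]
    funext x
    simp only [List.cons_append, Uw_cons, Function.comp_apply]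

/-! ### wordInc lemmas -/

lemma getLastD_irrel {α : Type*} {l : List α} (h : l ≠ []) (d d' : α) :
    l.getLastD d = l.getLastD d' := by
  cases l with
  | nil => exact absurd rfl h
  | cons a l => simp only [List.getLastD_cons]

lemma wordInc_cons (a : ℕ) (ω : List ℕ) (hω : ω ≠ []) (j : ℕ) :
    wordInc (a :: ω) j = a :: wordInc ω j := by
  match ω with
  | b :: ω' =>
    have h1 : (a :: b :: ω').getLastD 1 = (b :: ω').getLastD 1 := by
      rw [List.getLastD_cons]; exact getLastD_irrel (by simp) _ _
    simp only [wordInc, List.dropLast_cons₂, List.cons_append, h1]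

lemma wordInc_single (a j : ℕ) : wordInc [a] j = [a + j] := by
  simp [wordInc]

lemma wordInc_concat (ω : List ℕ) (a j : ℕ) : wordInc (ω ++ [a]) j = ω ++ [a + j] := by
  simp [wordInc, List.dropLast_concat, List.getLastD_concat]

lemma wordInc_eq_concat (ω : List ℕ) (j : ℕ) :
    wordInc ω j = ω.dropLast ++ [ω.getLastD 1 + j] := rfl

lemma wordInc_wordInc (ω : List ℕ) (j k : ℕ) :
    wordInc (wordInc ω j) k = wordInc ω (j + k) := by
  rw [wordInc_eq_concat ω j, wordInc_concat, wordInc_eq_concat]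
  congr 2
  omega

lemma dropLast_sum (ω : List ℕ) (hω : ω ≠ []) :
    ω.dropLast.sum + ω.getLastD 1 = ω.sum := by
  induction ω with
  | nil => exact absurd rfl hω
  | cons a ω ih =>
    cases ω with
    | nil => simp
    | cons b ω' =>
      have hrec := ih (by simp)
      have h1 : (a :: b :: ω').getLastD 1 = (b :: ω').getLastD 1 := by
        rw [List.getLastD_cons]; exact getLastD_irrel (by simp) _ _
      simp only [List.dropLast_cons₂, List.sum_cons, h1] at *
      omega

lemma wordInc_sum (ω : List ℕ) (hω : ω ≠ []) (j : ℕ) :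
    (wordInc ω j).sum = ω.sum + j := by
  rw [wordInc_eq_concat, List.sum_append, List.sum_cons, List.sum_nil,
    ← dropLast_sum ω hω]
  ring

lemma wordInc_isWord {ω : List ℕ} (hω : IsWord ω) (j : ℕ) : IsWord (wordInc ω j) := by
  obtain ⟨hne, hmem⟩ := hω
  refine ⟨by simp [wordInc], ?_⟩
  intro i hi
  rw [wordInc_eq_concat, List.mem_append] at hi
  rcases hi with hi | hi
  · exact hmem i (List.dropLast_subset ω hi)
  · simp only [List.mem_singleton] at hi
    subst hi
    have : ω.getLastD 1 ∈ ω ∨ ω.getLastD 1 = 1 := by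
      cases ω with
      | nil => exact Or.inr rfl
      | cons a ω' =>
        left
        rw [List.getLastD_cons]
        cases ω' with
        | nil => simp
        | cons b ω'' =>
          have : (b :: ω'').getLastD a = (b::ω'').getLast (by simp) := by
            rw [List.getLastD_eq_getLast?, List.getLast?_eq_getLast (by simp)]; rfl
          rw [this]
          exact List.mem_cons_of_mem a (List.getLast_mem _)
    rcases this with h | h
    · have := hmem _ h; omega
    · omega
/-! ### The encoding lemma -/

lemma pword_sum {ω : List ℕ} {l : ℕ} (h : pword ω = (2:ℝ)⁻¹ ^ l) : ω.sum = l := by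
  rw [pword_eq] at h
  exact (pow_right_strictAnti₀ (by norm_num) (by norm_num)).injective h

lemma encG : ∀ (ω : List ℕ), IsWord ω → ∃ σ : List Bool, σ.length + 1 = ω.sum ∧
    Sword ω = Uw (σ ++ [false]) ∧
    ∀ j : ℕ, Sword (wordInc ω (j+1)) = Uw (σ ++ List.replicate (j+1) true ++ [false]) := by
  intro ω
  induction ω with
  | nil => intro h; exact absurd rfl h.1
  | cons a rest ih =>
    rintro ⟨-, hmem⟩
    have ha : 1 ≤ a := hmem a (by simp)
    obtain ⟨m, rfl⟩ : ∃ m, a = m + 1 := ⟨a - 1, by omega⟩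
    cases rest with
    | nil =>
      refine ⟨List.replicate m true, by simp, ?_, ?_⟩
      · funext x
        simp only [Sword_cons, Sword_nil, Function.comp_apply, id_eq, smap_enc m]
      · intro j
        rw [wordInc_single]
        have h2 : m + 1 + (j + 1) = (m + (j+1)) + 1 := by omega
        rw [h2]
        funext x
        simp only [Sword_cons, Sword_nil, Function.comp_apply, id_eq]
        rw [smap_enc (m + (j+1))]
        have h3 : List.replicate (m+(j+1)) true ++ [false]
            = List.replicate m true ++ List.replicate (j+1) true ++ [false] := by
          rw [List.replicate_add, List.append_assoc]
        rw [h3]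
    | cons b rest' =>
      obtain ⟨σ', hlen, hS, hSj⟩ := ih ⟨by simp, fun i hi => hmem i (List.mem_cons_of_mem _ hi)⟩
      refine ⟨List.replicate m true ++ false :: σ', ?_, ?_, ?_⟩
      · simp only [List.length_append, List.length_replicate, List.length_cons,
          List.sum_cons] at *
        omega
      · funext x
        have : (List.replicate m true ++ false :: σ') ++ [false]
            = (List.replicate m true ++ [false]) ++ (σ' ++ [false]) := by simp
        rw [this, Uw_append]
        simp only [Sword_cons, Function.comp_apply, hS, smap_enc m]
      · intro j
        rw [wordInc_cons _ _ (by simp)]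
        funext x
        have : (List.replicate m true ++ false :: σ') ++ List.replicate (j+1) true ++ [false]
            = (List.replicate m true ++ [false]) ++ (σ' ++ List.replicate (j+1) true ++ [false]) := by
          simp
        rw [this, Uw_append]
        simp only [Sword_cons, Function.comp_apply, hSj j, smap_enc m]

lemma ub_false_half : ub false (1/2) = 1/6 := by norm_num [ub]
lemma ub_true_half : ub true (1/2) = 5/6 := by norm_num [ub]
lemma ub_false_threehalf : ub false (3/2) = 1/2 := by norm_num [ub]

/-- All the point identities coming from the encoding. -/
lemma enc_points (ω : List ℕ) (hω : IsWord ω) : ∃ σ : List Bool, σ.length + 1 = ω.sum ∧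
    aw ω = midp (σ ++ [false]) ∧ awInf ω = midp (σ ++ [true]) ∧
    aw (ω ++ [1]) = midp ((σ ++ [false]) ++ [false]) ∧
    awInf (ω ++ [1]) = midp ((σ ++ [false]) ++ [true]) ∧
    aw (wordInc ω 1) = midp ((σ ++ [true]) ++ [false]) ∧
    awInf (wordInc ω 1) = midp ((σ ++ [true]) ++ [true]) := by
  obtain ⟨σ, hlen, hS, hSj⟩ := encG ω hω
  have hawInf : ∀ κ : List ℕ, awInf κ = Sword (wordInc κ 1) (3/2) := by
    intro κ
    have : (3:ℝ)/2 = 1/2 + 1 := by norm_num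
    rw [awInf, this, Sword_affine, mul_one]
  have midp_concat : ∀ (κ : List Bool) (b : Bool), midp (κ ++ [b]) = Uw κ (ub b (1/2)) := by
    intro κ b
    rw [midp, Uw_append]
    rfl
  refine ⟨σ, hlen, ?_, ?_, ?_, ?_, ?_, ?_⟩
  · rw [aw, hS]; rfl
  · rw [hawInf, hSj 0, List.replicate_one]
    have h : σ ++ [true] ++ [false] = (σ ++ [true]) ++ [false] := by simp
    rw [h, Uw_append, midp]
    exact congrArg _ ub_false_threehalf
  · rw [aw, Sword_append, hS, midp_concat]
    refine congrArg _ ?_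
    show Smap 1 (1/2) = ub false (1/2)
    rw [smap_one]
  · rw [hawInf, wordInc_concat, Sword_append, hS, midp_concat]
    refine congrArg _ ?_
    show Smap (1+1) (3/2) = ub true (1/2)
    norm_num [Smap, ub]
  · rw [aw, hSj 0, List.replicate_one]
    have h : σ ++ [true] ++ [false] = (σ ++ [true]) ++ [false] := by simp
    rw [h, midp_concat, Uw_append]
    rfl
  · rw [hawInf, wordInc_wordInc, hSj 1]
    have h : σ ++ List.replicate 2 true ++ [false] = ((σ ++ [true]) ++ [true]) ++ [false] := by
      simp [List.replicate_succ]
    rw [h, Uw_append, midp]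
    exact congrArg _ ub_false_threehalf

/-! ### Decoding: surjectivity -/

lemma ub_true_smap {h : ℕ} (hh : 1 ≤ h) (y c : ℝ) :
    ub true (Smap h y + srat h * c) = Smap (h+1) y + srat (h+1) * c := by
  have h1 : Smap (h+1) y = ub true (Smap h y) := by rw [smap_succ h hh]; rfl
  have h2 : srat (h+1) = srat h * 3⁻¹ := by rw [srat, srat, pow_succ]
  rw [h1, h2]
  simp only [ub, if_true]
  ring

lemma ub_false_smap (y c : ℝ) :
    ub false (y + c) = Smap 1 y + srat 1 * c := by
  rw [smap_one]
  simp only [ub, if_false, srat, pow_one]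
  ring

lemma decode : ∀ (σ : List Bool), σ ≠ [] → ∃ ω : List ℕ, IsWord ω ∧ ω.sum = σ.length ∧
    (midp σ = aw ω ∨ midp σ = awInf ω) := by
  intro σ
  induction σ with
  | nil => intro h; exact absurd rfl h
  | cons b τ ih =>
    intro _
    cases τ with
    | nil =>
      refine ⟨[1], ⟨by simp, by simp⟩, by simp, ?_⟩
      cases b
      · left
        rw [midp, aw]
        simp only [Uw_cons, Uw_nil, Sword_cons, Sword_nil, Function.comp_apply, id_eq,
          smap_one]
      · right
        rw [midp, awInf, wordInc_single]
        simp only [Uw_cons, Uw_nil, Sword_cons, Sword_nil, Function.comp_apply, id_eq,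
          Smap, ub, sword_cons, sword_nil, srat]
        norm_num
    | cons c τ' =>
      obtain ⟨ω, hw, hsum, hcase⟩ := ih (by simp)
      have hwne := hw.1
      have hmidp : midp (b :: c :: τ') = ub b (midp (c :: τ')) := rfl
      cases b
      · -- prepend the letter 1
        refine ⟨1 :: ω, ⟨by simp, ?_⟩, by simp only [List.sum_cons, List.length_cons, hsum]; omega, ?_⟩
        · intro i hi
          rcases List.mem_cons.mp hi with rfl | hi
          · exact le_rfl
          · exact hw.2 i hi
        rcases hcase with hch | hch
        · left
          rw [hmidp, hch, aw, aw]
          have : ub false (Sword ω (1/2)) = Smap 1 (Sword ω (1/2)) + srat 1 * 0 := by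
            rw [← ub_false_smap]; ring_nf
          rw [this]
          simp only [Sword_cons, Function.comp_apply, mul_zero, add_zero]
        · right
          rw [hmidp, hch, awInf, awInf, wordInc_cons 1 ω hwne]
          simp only [Sword_cons, Function.comp_apply, sword_cons]
          rw [ub_false_smap]
      · -- increment the first letter
        obtain ⟨j, rest, rfl⟩ : ∃ j rest, ω = j :: rest := by
          cases ω with
          | nil => exact absurd rfl hwne
          | cons j rest => exact ⟨j, rest, rfl⟩
        have hj : 1 ≤ j := hw.2 j (by simp)
        refine ⟨(j+1) :: rest, ⟨by simp, ?_⟩, by simp only [List.sum_cons, List.length_cons] at hsum ⊢; omega, ?_⟩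
        · intro i hi
          rcases List.mem_cons.mp hi with rfl | hi
          · omega
          · exact hw.2 i (List.mem_cons_of_mem _ hi)
        rcases hcase with hch | hch
        · left
          rw [hmidp, hch, aw, aw]
          simp only [Sword_cons, Function.comp_apply]
          have := ub_true_smap hj (Sword rest (1/2)) 0
          rw [mul_zero, add_zero, mul_zero, add_zero] at this
          exact this
        · right
          rw [hmidp, hch]
          cases rest with
          | nil =>
            rw [awInf, awInf, wordInc_single, wordInc_single]
            simp only [Sword_cons, Sword_nil, Function.comp_apply, id_eq, sword_cons,
              sword_nil]
            exact ub_true_smap (h := j + 1) (by omega) _ _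
          | cons r rest' =>
            rw [awInf, awInf, wordInc_cons j _ (by simp), wordInc_cons (j+1) _ (by simp)]
            simp only [Sword_cons, Function.comp_apply, sword_cons]
            exact ub_true_smap hj _ _
/-! ### Identification of `alphaSet` and `alphaNI` -/

lemma alphaSet_eq {l : ℕ} (hl : 1 ≤ l) : alphaSet l = ↑((Bls l).image midp) := by
  ext x
  simp only [Finset.coe_image, Set.mem_image, Finset.mem_coe, alphaSet, Set.mem_setOf_eq]
  constructor
  · rintro ⟨ω, hw, hp, hx⟩
    have hsum : ω.sum = l := pword_sum hp
    obtain ⟨σ, hlen, h1, h2, -, -, -, -⟩ := enc_points ω hw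
    rcases hx with rfl | rfl
    · exact ⟨σ ++ [false], Bls_mem.mpr (by simp; omega), h1.symm⟩
    · exact ⟨σ ++ [true], Bls_mem.mpr (by simp; omega), h2.symm⟩
  · rintro ⟨σ, hσ, rfl⟩
    have hlen := Bls_mem.mp hσ
    have hne : σ ≠ [] := by
      intro h; rw [h] at hlen; simp at hlen; omega
    obtain ⟨ω, hw, hsum, hcase⟩ := decode σ hne
    exact ⟨ω, hw, by rw [pword_eq, hsum, hlen], hcase⟩

open Classical in
/-- The split words. -/
noncomputable def SpF (l : ℕ) (I : Set ℝ) : Finset (List Bool) :=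
  (Bls l).filter (fun σ => midp σ ∈ I)

open Classical in
/-- The non-split words. -/
noncomputable def NSpF (l : ℕ) (I : Set ℝ) : Finset (List Bool) :=
  (Bls l).filter (fun σ => midp σ ∉ I)

/-- The explicit description of `alphaNI`. -/
noncomputable def AFin (l : ℕ) (I : Set ℝ) : Finset ℝ :=
  (NSpF l I).image midp ∪ (SpF l I).image (fun σ => midp (σ ++ [false]))
    ∪ (SpF l I).image (fun σ => midp (σ ++ [true]))

lemma mem_SpF {l : ℕ} {I : Set ℝ} {σ : List Bool} :
    σ ∈ SpF l I ↔ σ ∈ Bls l ∧ midp σ ∈ I := by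
  simp [SpF, Finset.mem_filter]

lemma mem_NSpF {l : ℕ} {I : Set ℝ} {σ : List Bool} :
    σ ∈ NSpF l I ↔ σ ∈ Bls l ∧ midp σ ∉ I := by
  simp [NSpF, Finset.mem_filter]

lemma alphaNI_eq {l : ℕ} (hl : 1 ≤ l) {I : Set ℝ} (hI : I ⊆ alphaSet l) :
    alphaNI l I = ↑(AFin l I) := by
  have hBl : ∀ {ω : List ℕ}, IsWord ω → pword ω = (2:ℝ)⁻¹ ^ l →
      ∃ σ', σ'.length + 1 = l ∧
      aw ω = midp (σ' ++ [false]) ∧ awInf ω = midp (σ' ++ [true]) ∧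
      aw (ω ++ [1]) = midp ((σ' ++ [false]) ++ [false]) ∧
      awInf (ω ++ [1]) = midp ((σ' ++ [false]) ++ [true]) ∧
      aw (wordInc ω 1) = midp ((σ' ++ [true]) ++ [false]) ∧
      awInf (wordInc ω 1) = midp ((σ' ++ [true]) ++ [true]) := by
    intro ω hw hp
    obtain ⟨σ', hlen, h⟩ := enc_points ω hw
    exact ⟨σ', by rw [hlen, pword_sum hp], h⟩
  ext x
  simp only [alphaNI, Set.mem_union, Set.mem_setOf_eq, Set.mem_diff, AFin, Finset.coe_union,
    Finset.coe_image, Set.mem_image, Finset.mem_coe]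
  constructor
  · rintro ((⟨hx, hxI⟩ | ⟨ω, hw, hp, hmem, hx⟩) | ⟨ω, hw, hp, hmem, hx⟩)
    · rw [alphaSet_eq hl] at hx
      simp only [Finset.coe_image, Set.mem_image, Finset.mem_coe] at hx
      obtain ⟨σ, hσ, rfl⟩ := hx
      exact Or.inl (Or.inl ⟨σ, mem_NSpF.mpr ⟨hσ, hxI⟩, rfl⟩)
    · obtain ⟨σ', hlen, h1, h2, h3, h4, h5, h6⟩ := hBl hw hp
      have hsp : σ' ++ [false] ∈ SpF l I :=
        mem_SpF.mpr ⟨Bls_mem.mpr (by simp; omega), by rw [← h1]; exact hmem⟩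
      rcases hx with rfl | rfl
      · exact Or.inl (Or.inr ⟨σ' ++ [false], hsp, h3.symm⟩)
      · exact Or.inr ⟨σ' ++ [false], hsp, h4.symm⟩
    · obtain ⟨σ', hlen, h1, h2, h3, h4, h5, h6⟩ := hBl hw hp
      have hsp : σ' ++ [true] ∈ SpF l I :=
        mem_SpF.mpr ⟨Bls_mem.mpr (by simp; omega), by rw [← h2]; exact hmem⟩
      rcases hx with rfl | rfl
      · exact Or.inl (Or.inr ⟨σ' ++ [true], hsp, h5.symm⟩)
      · exact Or.inr ⟨σ' ++ [true], hsp, h6.symm⟩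
  · have key : ∀ σ ∈ SpF l I, ∀ b : Bool,
        (∃ ω, IsWord ω ∧ pword ω = (2:ℝ)⁻¹ ^ l ∧ aw ω ∈ I ∧
          (midp (σ ++ [b]) = aw (ω ++ [1]) ∨ midp (σ ++ [b]) = awInf (ω ++ [1]))) ∨
        (∃ ω, IsWord ω ∧ pword ω = (2:ℝ)⁻¹ ^ l ∧ awInf ω ∈ I ∧
          (midp (σ ++ [b]) = aw (wordInc ω 1) ∨ midp (σ ++ [b]) = awInf (wordInc ω 1))) := by
      intro σ hσ b
      obtain ⟨hσB, hσI⟩ := mem_SpF.mp hσ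
      obtain ⟨ω, hw, hp, hcase⟩ := hI hσI
      obtain ⟨σ', hlen, h1, h2, h3, h4, h5, h6⟩ := hBl hw hp
      have hlenσ : σ.length = l := Bls_mem.mp hσB
      rcases hcase with hc | hc
      · have hσeq : σ = σ' ++ [false] := by
          apply midp_inj (by simp; omega)
          rw [hc, h1]
        subst hσeq
        refine Or.inl ⟨ω, hw, hp, by rwa [hc] at hσI, ?_⟩
        cases b
        · exact Or.inl (by rw [h3])
        · exact Or.inr (by rw [h4])
      · have hσeq : σ = σ' ++ [true] := by
          apply midp_inj (by simp; omega)
          rw [hc, h2]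
        subst hσeq
        refine Or.inr ⟨ω, hw, hp, by rwa [hc] at hσI, ?_⟩
        cases b
        · exact Or.inl (by rw [h5])
        · exact Or.inr (by rw [h6])
    rintro ((⟨σ, hσ, rfl⟩ | ⟨σ, hσ, rfl⟩) | ⟨σ, hσ, rfl⟩)
    · obtain ⟨hσB, hσI⟩ := mem_NSpF.mp hσ
      refine Or.inl (Or.inl ⟨?_, hσI⟩)
      rw [alphaSet_eq hl, Finset.coe_image]
      exact Set.mem_image_of_mem _ (Finset.mem_coe.mpr hσB)
    · rcases key σ hσ false with h | h
      · exact Or.inl (Or.inr h)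
      · exact Or.inr h
    · rcases key σ hσ true with h | h
      · exact Or.inl (Or.inr h)
      · exact Or.inr h
/-! ### Measure-theoretic lemmas -/

lemma ub_meas (b : Bool) : Measurable (ub b) := (ub_cont b).measurable

lemma smap_meas (j : ℕ) : Measurable (Smap j) := by
  unfold Smap; fun_prop

lemma supp_compl {P : Measure ℝ} [IsProbabilityMeasure P]
    (hsupp : P (Set.Icc 0 1) = 1) : P (Set.Icc (0:ℝ) 1)ᶜ = 0 := by
  rw [measure_compl measurableSet_Icc (by simp), hsupp, measure_univ, tsub_self]

lemma integrable_cont {μ : Measure ℝ} [IsFiniteMeasure μ]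
    (h0 : μ (Set.Icc (0:ℝ) 1)ᶜ = 0) {f : ℝ → ℝ} (hf : Continuous f) : Integrable f μ := by
  obtain ⟨C, hC⟩ := isCompact_Icc.exists_bound_of_continuousOn hf.continuousOn
  refine Integrable.mono' (integrable_const C) hf.aestronglyMeasurable ?_
  rw [ae_iff]
  refine measure_mono_null (fun x hx => ?_) h0
  exact fun hmem => hx (hC x hmem)

lemma map_supp {P : Measure ℝ} [IsProbabilityMeasure P]
    (h0 : P (Set.Icc (0:ℝ) 1)ᶜ = 0) (b : Bool) :
    (P.map (ub b)) (Set.Icc (0:ℝ) 1)ᶜ = 0 := by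
  rw [Measure.map_apply (ub_meas b) measurableSet_Icc.compl]
  refine measure_mono_null (fun x hx => ?_) h0
  intro hmem
  exact hx (ub_mem b hmem)

/-- The binary self-similarity: `P = ½ (u₀)_*P + ½ (u₁)_*P`. -/
lemma binaryP {P : Measure ℝ} [IsProbabilityMeasure P] (hself : SelfSim P) :
    P = (2:ℝ≥0∞)⁻¹ • P.map (ub false) + (2:ℝ≥0∞)⁻¹ • P.map (ub true) := by
  have hself' : P = Measure.sum (fun j : ℕ => ((2:ℝ≥0∞) ^ (j+1))⁻¹ • P.map (Smap (j+1))) :=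
    hself
  ext s hs
  have hsum : P s = ∑' j : ℕ, (((2:ℝ≥0∞) ^ (j+1))⁻¹ • P.map (Smap (j+1))) s := by
    conv_lhs => rw [hself']
    rw [Measure.sum_apply _ hs]
  have htail : ∀ j : ℕ, (((2:ℝ≥0∞) ^ (j+1+1))⁻¹ • P.map (Smap (j+1+1))) s
      = 2⁻¹ * (((2:ℝ≥0∞) ^ (j+1))⁻¹ * (P.map (Smap (j+1))) ((ub true)⁻¹' s)) := by
    intro j
    rw [smap_succ (j+1) (by omega),
      ← Measure.map_map (ub_meas true) (smap_meas (j+1)),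
      Measure.smul_apply, smul_eq_mul, Measure.map_apply (ub_meas true) hs]
    rw [pow_succ, ENNReal.mul_inv (by simp) (by simp)]
    ring
  rw [hsum, tsum_eq_zero_add' ENNReal.summable]
  simp only [htail]
  rw [ENNReal.tsum_mul_left]
  have hpre : ∑' j : ℕ, ((2:ℝ≥0∞) ^ (j+1))⁻¹ * (P.map (Smap (j+1))) ((ub true)⁻¹' s)
      = P ((ub true)⁻¹' s) := by
    conv_rhs => rw [hself']
    rw [Measure.sum_apply _ (hs.preimage (ub_meas true))]
    simp only [Measure.smul_apply, smul_eq_mul]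
  rw [hpre, ← Measure.map_apply (ub_meas true) hs]
  simp only [Measure.add_apply, Measure.smul_apply, smul_eq_mul, zero_add, pow_one]
  congr 2
  rw [smap_one]

lemma int_binary {P : Measure ℝ} [IsProbabilityMeasure P]
    (h0 : P (Set.Icc (0:ℝ) 1)ᶜ = 0) (hself : SelfSim P)
    (f : ℝ → ℝ) (hf : Continuous f) :
    ∫ x, f x ∂P = 2⁻¹ * ∫ x, f (ub false x) ∂P + 2⁻¹ * ∫ x, f (ub true x) ∂P := by
  have hint : ∀ b : Bool, Integrable f (P.map (ub b)) := by
    intro b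
    have : IsProbabilityMeasure (P.map (ub b)) :=
      Measure.isProbabilityMeasure_map (ub_meas b).aemeasurable
    exact integrable_cont (map_supp h0 b) hf
  conv_lhs => rw [binaryP hself]
  rw [integral_add_measure ((hint false).smul_measure (by simp))
    ((hint true).smul_measure (by simp)),
    integral_smul_measure, integral_smul_measure,
    integral_map (ub_meas false).aemeasurable hf.aestronglyMeasurable,
    integral_map (ub_meas true).aemeasurable hf.aestronglyMeasurable]
  norm_num [smul_eq_mul]

lemma int_iter {P : Measure ℝ} [IsProbabilityMeasure P]
    (h0 : P (Set.Icc (0:ℝ) 1)ᶜ = 0) (hself : SelfSim P) :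
    ∀ (l : ℕ) (f : ℝ → ℝ), Continuous f →
    ∫ x, f x ∂P = (2:ℝ)⁻¹ ^ l * ∑ σ ∈ Bls l, ∫ x, f (Uw σ x) ∂P := by
  intro l
  induction l with
  | zero =>
    intro f hf
    rw [Bls_zero, Finset.sum_singleton]
    simp
  | succ l ih =>
    intro f hf
    rw [int_binary h0 hself f hf,
      ih (fun y => f (ub false y)) (hf.comp (ub_cont false)),
      ih (fun y => f (ub true y)) (hf.comp (ub_cont true)),
      Bls_succ, Finset.sum_union, Finset.sum_image (fun a _ b _ h => by simpa using h),
      Finset.sum_image (fun a _ b _ h => by simpa using h)]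
    · simp only [Uw_cons, Function.comp_apply, pow_succ]
      ring
    · rw [Finset.disjoint_left]
      rintro σ hσ hσ'
      simp only [Finset.mem_image] at hσ hσ'
      obtain ⟨τ, _, rfl⟩ := hσ
      obtain ⟨κ, _, h⟩ := hσ'
      simp at h

lemma moments {P : Measure ℝ} [IsProbabilityMeasure P]
    (h0 : P (Set.Icc (0:ℝ) 1)ᶜ = 0) (hself : SelfSim P) :
    ∫ x, (x - 1/2)^2 ∂P = 1/8 := by
  have hif : ∀ (g : ℝ → ℝ), Continuous g → Integrable g P := fun g hg => integrable_cont h0 hg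
  have hI : Integrable (fun x : ℝ => x) P := hif _ continuous_id
  have hI2 : Integrable (fun x : ℝ => x^2) P := hif _ (by fun_prop)
  set m := ∫ x, x ∂P with hm
  set s := ∫ x, x^2 ∂P with hs
  have hub_false : ∀ x : ℝ, ub false x = 3⁻¹ * x := by intro x; simp [ub]; ring
  have hub_true : ∀ x : ℝ, ub true x = 3⁻¹ * x + 2/3 := by intro x; simp [ub]; ring
  have hmeq : m = 2⁻¹ * (3⁻¹ * m) + 2⁻¹ * (3⁻¹ * m + 2/3) := by
    have h1 := int_binary h0 hself (fun x => x) continuous_id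
    simp only [hub_false, hub_true] at h1
    rw [integral_const_mul] at h1
    rw [integral_add (hI.const_mul 3⁻¹) (integrable_const _), integral_const_mul,
      integral_const, probReal_univ] at h1
    simpa using h1
  have hm12 : m = 1/2 := by linarith
  have hseq : s = 2⁻¹ * (9⁻¹ * s) + 2⁻¹ * (9⁻¹ * s + 4/9 * m + 4/9) := by
    have h1 := int_binary h0 hself (fun x => x^2) (by fun_prop)
    have e1 : ∀ x : ℝ, (ub false x)^2 = 9⁻¹ * x^2 := by
      intro x; rw [hub_false]; ring
    have e2 : ∀ x : ℝ, (ub true x)^2 = 9⁻¹ * x^2 + 4/9 * x + 4/9 := by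
      intro x; rw [hub_true]; ring
    simp only [e1, e2] at h1
    rw [integral_const_mul] at h1
    rw [integral_add (by exact (hI2.const_mul 9⁻¹).add (hI.const_mul (4/9)))
      (integrable_const _),
      integral_add (hI2.const_mul 9⁻¹) (hI.const_mul (4/9)),
      integral_const_mul, integral_const_mul, integral_const, probReal_univ] at h1
    simpa using h1
  have hs38 : s = 3/8 := by rw [hm12] at hseq; linarith
  have hV : ∀ x : ℝ, (x - 1/2)^2 = x^2 - x + 1/4 := by intro x; ring
  have hI3 : Integrable (fun x : ℝ => x^2 - x) P := hif _ (by fun_prop)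
  simp only [hV]
  rw [integral_add hI3 (integrable_const _), integral_sub hI2 hI,
    integral_const, probReal_univ]
  simp only [← hs, ← hm, hs38, hm12]
  norm_num
/-! ### Nearest point computations -/

lemma midp_concat (κ : List Bool) (b : Bool) : midp (κ ++ [b]) = Uw κ (ub b (1/2)) := by
  rw [midp, Uw_append]
  rfl

lemma Uw_dist (σ : List Bool) (s t : ℝ) :
    |Uw σ s - Uw σ t| = (3:ℝ)⁻¹ ^ σ.length * |s - t| := by
  rw [Uw_sub, abs_mul, abs_of_nonneg (by positivity : (0:ℝ) ≤ (3:ℝ)⁻¹ ^ σ.length)]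

lemma dist_to_mid (σ : List Bool) {x : ℝ} (hx : x ∈ Set.Icc (0:ℝ) 1) :
    |Uw σ x - midp σ| ≤ (3:ℝ)⁻¹ ^ σ.length / 2 := by
  rw [midp, Uw_dist]
  rcases hx with ⟨h0, h1⟩
  have h2 : |x - 1/2| ≤ 1/2 := abs_le.mpr ⟨by linarith, by linarith⟩
  have h3 : (0:ℝ) < (3:ℝ)⁻¹ ^ σ.length := by positivity
  nlinarith

lemma nearest (A : Finset ℝ) (hA : A.Nonempty) (y own : ℝ) (hown : own ∈ A)
    (hle : ∀ a ∈ A, |y - own| ≤ |y - a|) :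
    A.inf' hA (fun a => (y - a)^2) = (y - own)^2 := by
  refine le_antisymm (Finset.inf'_le _ hown) (Finset.le_inf' _ _ fun a ha => ?_)
  calc (y - own)^2 = |y - own|^2 := (sq_abs _).symm
    _ ≤ |y - a|^2 := by
        have := hle a ha
        have h0 := abs_nonneg (y - own)
        nlinarith
    _ = (y - a)^2 := sq_abs _

lemma AFin_nonempty (l : ℕ) (I : Set ℝ) : (AFin l I).Nonempty := by
  have hB : (Bls l).Nonempty := by
    rw [← Finset.card_pos, Bls_card]
    positivity
  obtain ⟨σ, hσ⟩ := hB
  by_cases h : midp σ ∈ I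
  · exact ⟨midp (σ ++ [false]), by
      simp only [AFin, Finset.mem_union, Finset.mem_image]
      exact Or.inl (Or.inr ⟨σ, mem_SpF.mpr ⟨hσ, h⟩, rfl⟩)⟩
  · exact ⟨midp σ, by
      simp only [AFin, Finset.mem_union, Finset.mem_image]
      exact Or.inl (Or.inl ⟨σ, mem_NSpF.mpr ⟨hσ, h⟩, rfl⟩)⟩

lemma mem_AFin_cases {l : ℕ} {I : Set ℝ} {a : ℝ} (ha : a ∈ AFin l I) :
    (∃ τ ∈ NSpF l I, a = midp τ) ∨ (∃ τ ∈ SpF l I, ∃ b : Bool, a = midp (τ ++ [b])) := by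
  simp only [AFin, Finset.mem_union, Finset.mem_image] at ha
  rcases ha with ((⟨τ, hτ, rfl⟩ | ⟨τ, hτ, rfl⟩) | ⟨τ, hτ, rfl⟩)
  · exact Or.inl ⟨τ, hτ, rfl⟩
  · exact Or.inr ⟨τ, hτ, false, rfl⟩
  · exact Or.inr ⟨τ, hτ, true, rfl⟩

lemma near_unsplit {l : ℕ} {I : Set ℝ} {σ : List Bool} (hσ : σ ∈ NSpF l I)
    {x : ℝ} (hx : x ∈ Set.Icc (0:ℝ) 1) :
    (AFin l I).inf' (AFin_nonempty l I) (fun a => (Uw σ x - a)^2)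
      = (Uw σ x - midp σ)^2 := by
  obtain ⟨hσB, hσI⟩ := mem_NSpF.mp hσ
  have hlenσ : σ.length = l := Bls_mem.mp hσB
  have hown : midp σ ∈ AFin l I := by
    simp only [AFin, Finset.mem_union, Finset.mem_image]
    exact Or.inl (Or.inl ⟨σ, hσ, rfl⟩)
  refine nearest _ _ _ _ hown fun a ha => ?_
  have hD : |Uw σ x - midp σ| ≤ (3:ℝ)⁻¹ ^ l / 2 := by
    rw [← hlenσ]; exact dist_to_mid σ hx
  rcases mem_AFin_cases ha with ⟨τ, hτ, rfl⟩ | ⟨τ, hτ, b, rfl⟩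
  · obtain ⟨hτB, hτI⟩ := mem_NSpF.mp hτ
    by_cases hστ : σ = τ
    · subst hστ; exact le_refl _
    · have hsep := Uw_sep (by rw [hlenσ, Bls_mem.mp hτB]) hστ hx half_mem
      rw [hlenσ] at hsep
      have h5 : (3:ℝ)⁻¹ ^ l ≤ |Uw σ x - midp τ| := hsep
      have h3pos : (0:ℝ) < (3:ℝ)⁻¹ ^ l := by positivity
      linarith
  · obtain ⟨hτB, hτI⟩ := mem_SpF.mp hτ
    have hστ : σ ≠ τ := fun h => hσI (h ▸ hτI)
    rw [midp_concat]
    have hsep := Uw_sep (by rw [hlenσ, Bls_mem.mp hτB]) hστ hx (ub_mem b half_mem)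
    rw [hlenσ] at hsep
    calc |Uw σ x - midp σ| ≤ (3:ℝ)⁻¹ ^ l / 2 := hD
      _ ≤ (3:ℝ)⁻¹ ^ l := by
          have : (0:ℝ) < (3:ℝ)⁻¹ ^ l := by positivity
          linarith
      _ ≤ _ := hsep

lemma near_split {l : ℕ} {I : Set ℝ} {σ : List Bool} (hσ : σ ∈ SpF l I) (b : Bool)
    {x : ℝ} (hx : x ∈ Set.Icc (0:ℝ) 1) :
    (AFin l I).inf' (AFin_nonempty l I) (fun a => (Uw σ (ub b x) - a)^2)
      = (Uw σ (ub b x) - midp (σ ++ [b]))^2 := by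
  obtain ⟨hσB, hσI⟩ := mem_SpF.mp hσ
  have hlenσ : σ.length = l := Bls_mem.mp hσB
  have hown : midp (σ ++ [b]) ∈ AFin l I := by
    simp only [AFin, Finset.mem_union, Finset.mem_image]
    cases b
    · exact Or.inl (Or.inr ⟨σ, hσ, rfl⟩)
    · exact Or.inr ⟨σ, hσ, rfl⟩
  refine nearest _ _ _ _ hown fun a ha => ?_
  have h3pos : (0:ℝ) < (3:ℝ)⁻¹ ^ l := by positivity
  have hD : |Uw σ (ub b x) - midp (σ ++ [b])| ≤ (3:ℝ)⁻¹ ^ l / 6 := by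
    rw [midp_concat, Uw_dist, hlenσ]
    have h2 : |ub b x - ub b (1/2)| ≤ 1/6 := by
      have h4 : ub b x - ub b (1/2) = (x - 1/2)/3 := ub_sub b x (1/2)
      rw [h4, abs_div, abs_of_nonneg (by norm_num : (0:ℝ) ≤ 3)]
      rcases hx with ⟨ha, hb⟩
      have : |x - 1/2| ≤ 1/2 := abs_le.mpr ⟨by linarith, by linarith⟩
      linarith
    nlinarith
  rcases mem_AFin_cases ha with ⟨τ, hτ, rfl⟩ | ⟨τ, hτ, c, rfl⟩
  · obtain ⟨hτB, hτI⟩ := mem_NSpF.mp hτ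
    have hστ : σ ≠ τ := fun h => hτI (h ▸ hσI)
    have hsep := Uw_sep (by rw [hlenσ, Bls_mem.mp hτB]) hστ (ub_mem b hx) half_mem
    rw [hlenσ] at hsep
    have h5 : (3:ℝ)⁻¹ ^ l ≤ |Uw σ (ub b x) - midp τ| := hsep
    linarith
  · obtain ⟨hτB, hτI⟩ := mem_SpF.mp hτ
    by_cases hστ : σ = τ
    · subst hστ
      by_cases hbc : b = c
      · subst hbc; exact le_refl _
      · have hR : |Uw σ (ub b x) - midp (σ ++ [c])| = (3:ℝ)⁻¹ ^ l * |ub b x - ub c (1/2)| := by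
          rw [midp_concat, Uw_dist, hlenσ]
        have hsep2 : (3:ℝ)⁻¹ ≤ |ub b x - ub c (1/2)| := ub_sep hbc hx half_mem
        rw [hR]
        nlinarith
    · have hsep := Uw_sep (by rw [hlenσ, Bls_mem.mp hτB]) hστ (ub_mem b hx) (ub_mem c half_mem)
      rw [hlenσ] at hsep
      have h5 : (3:ℝ)⁻¹ ^ l ≤ |Uw σ (ub b x) - midp (τ ++ [c])| := by
        rw [midp_concat]
        exact hsep
      linarith

lemma cont_inf' (A : Finset ℝ) (hA : A.Nonempty) :
    Continuous (fun x : ℝ => A.inf' hA (fun a => (x - a)^2)) := by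
  induction hA using Finset.Nonempty.cons_induction with
  | singleton a => simp only [Finset.inf'_singleton]; fun_prop
  | cons a s h hs ih =>
    simp only [Finset.inf'_cons hs]
    exact Continuous.min (by fun_prop) ih
/-! ### Per-word integrals and the main assembly -/

lemma sq_third_pow (m : ℕ) : ((3:ℝ)⁻¹ ^ m)^2 = (9:ℝ)⁻¹ ^ m := by
  rw [sq, ← mul_pow]
  norm_num

open Classical in
lemma int_word {P : Measure ℝ} [IsProbabilityMeasure P]
    (h0 : P (Set.Icc (0:ℝ) 1)ᶜ = 0) (hself : SelfSim P)
    {l : ℕ} {I : Set ℝ} {σ : List Bool} (hσB : σ ∈ Bls l) :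
    ∫ x, (AFin l I).inf' (AFin_nonempty l I) (fun a => (Uw σ x - a)^2) ∂P
      = (if midp σ ∈ I then (9:ℝ)⁻¹ ^ (l+1) else (9:ℝ)⁻¹ ^ l) * (1/8) := by
  have hae : ∀ᵐ x ∂P, x ∈ Set.Icc (0:ℝ) 1 := by
    rw [ae_iff]
    exact h0
  have hg := cont_inf' (AFin l I) (AFin_nonempty l I)
  have hV := moments h0 hself
  have hlen : σ.length = l := Bls_mem.mp hσB
  by_cases hIc : midp σ ∈ I
  · rw [if_pos hIc]
    have hσS : σ ∈ SpF l I := mem_SpF.mpr ⟨hσB, hIc⟩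
    have hgU : Continuous (fun y => (AFin l I).inf' (AFin_nonempty l I)
        (fun a => (Uw σ y - a)^2)) := hg.comp (Uw_cont σ)
    have hb := int_binary h0 hself _ hgU
    have he : ∀ b : Bool, ∫ x, (AFin l I).inf' (AFin_nonempty l I)
        (fun a => (Uw σ (ub b x) - a)^2) ∂P = (9:ℝ)⁻¹ ^ (l+1) * (1/8) := by
      intro b
      have hcong : ∀ᵐ x ∂P, (AFin l I).inf' (AFin_nonempty l I)
          (fun a => (Uw σ (ub b x) - a)^2) = (9:ℝ)⁻¹ ^ (l+1) * (x - 1/2)^2 := by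
        filter_upwards [hae] with x hx
        rw [near_split hσS b hx]
        have h1 : Uw σ (ub b x) = Uw (σ ++ [b]) x := by rw [Uw_append]; rfl
        have h2 : midp (σ ++ [b]) = Uw (σ ++ [b]) (1/2) := rfl
        have h3 : (σ ++ [b]).length = l + 1 := by simp [hlen]
        rw [h1, h2, Uw_sub, h3, mul_pow, sq_third_pow]
      rw [integral_congr_ae hcong, integral_const_mul, hV]
    rw [hb, he false, he true]
    ring
  · rw [if_neg hIc]
    have hσN : σ ∈ NSpF l I := mem_NSpF.mpr ⟨hσB, hIc⟩
    have hcong : ∀ᵐ x ∂P, (AFin l I).inf' (AFin_nonempty l I)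
        (fun a => (Uw σ x - a)^2) = (9:ℝ)⁻¹ ^ l * (x - 1/2)^2 := by
      filter_upwards [hae] with x hx
      rw [near_unsplit hσN hx]
      have h2 : midp σ = Uw σ (1/2) := rfl
      rw [h2, Uw_sub, hlen, mul_pow, sq_third_pow]
    rw [integral_congr_ae hcong, integral_const_mul, hV]
open Classical in
theorem distortion_of_alphaNI (P : Measure ℝ) [IsProbabilityMeasure P]
    (hsupp : P (Set.Icc 0 1) = 1) (hself : SelfSim P)
    (n : ℕ) (hn : 2 ≤ n) (l : ℕ) (hl : 2 ^ l ≤ n) (hl' : n < 2 ^ (l + 1))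
    (I : Set ℝ) (hI : I ⊆ alphaSet l) (hcard : I.ncard = n - 2 ^ l) :
    err P (alphaNI l I)
      = 1 / 18 ^ l * (1 / 8) * (2 ^ (l + 1) - (n : ℝ) + 1 / 9 * ((n : ℝ) - 2 ^ l)) := by
  have hl1 : 1 ≤ l := by
    by_contra hcon
    have hl0 : l = 0 := by omega
    subst hl0
    norm_num at hl'
    omega
  have h0 : P (Set.Icc (0:ℝ) 1)ᶜ = 0 := supp_compl hsupp
  -- cardinalities
  have hIeq : I = midp '' ↑(SpF l I) := by
    ext y
    constructor
    · intro hy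
      have hy2 := hI hy
      rw [alphaSet_eq hl1] at hy2
      simp only [Finset.coe_image, Set.mem_image, Finset.mem_coe] at hy2 ⊢
      obtain ⟨σ, hσ, rfl⟩ := hy2
      exact ⟨σ, mem_SpF.mpr ⟨hσ, hy⟩, rfl⟩
    · intro hy
      simp only [Set.mem_image, Finset.mem_coe] at hy
      obtain ⟨σ, hσ, rfl⟩ := hy
      exact (mem_SpF.mp hσ).2
  have hinj : Set.InjOn midp ↑(SpF l I) := by
    intro a ha b hb hab
    have h1 := Bls_mem.mp (mem_SpF.mp (Finset.mem_coe.mp ha)).1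
    have h2 := Bls_mem.mp (mem_SpF.mp (Finset.mem_coe.mp hb)).1
    exact midp_inj (by rw [h1, h2]) hab
  have hkcard : (SpF l I).card = n - 2^l := by
    have h2 : I.ncard = (SpF l I).card := by
      conv_lhs => rw [hIeq]
      rw [Set.ncard_image_of_injOn hinj, Set.ncard_coe_finset]
    rw [← h2, hcard]
  have hdisj : Disjoint (SpF l I) (NSpF l I) := by
    rw [Finset.disjoint_left]
    intro σ h1 h2
    exact (mem_NSpF.mp h2).2 (mem_SpF.mp h1).2
  have hunion : SpF l I ∪ NSpF l I = Bls l := by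
    ext σ
    simp only [Finset.mem_union, mem_SpF, mem_NSpF]
    by_cases h : midp σ ∈ I <;> by_cases h2 : σ ∈ Bls l <;> tauto
  have hncard : (NSpF l I).card = 2^l - (n - 2^l) := by
    have h1 : (SpF l I).card + (NSpF l I).card = 2^l := by
      rw [← Finset.card_union_of_disjoint hdisj, hunion, Bls_card]
    omega
  -- rewrite the error as a sum
  have hANI : alphaNI l I = ↑(AFin l I) := alphaNI_eq hl1 hI
  have herr : err P (alphaNI l I)
      = ∫ x, (AFin l I).inf' (AFin_nonempty l I) (fun a => (x - a)^2) ∂P := by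
    rw [alphaNI_eq hl1 hI, err]
    refine integral_congr_ae (Filter.Eventually.of_forall fun x => ?_)
    exact (Finset.inf'_eq_csInf_image _ _ _).symm
  rw [herr, int_iter h0 hself l _ (cont_inf' _ _),
    Finset.sum_congr rfl (fun σ hσ => int_word h0 hself hσ)]
  -- split the sum
  have e1 : ∑ σ ∈ SpF l I, (if midp σ ∈ I then (9:ℝ)⁻¹ ^ (l+1) else (9:ℝ)⁻¹ ^ l) * (1/8)
      = ((n:ℝ) - 2^l) * ((9:ℝ)⁻¹ ^ (l+1) * (1/8)) := by
    have hc : ∀ σ ∈ SpF l I,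
        (if midp σ ∈ I then (9:ℝ)⁻¹ ^ (l+1) else (9:ℝ)⁻¹ ^ l) * (1/8)
        = (9:ℝ)⁻¹ ^ (l+1) * (1/8) := fun σ hσ => by rw [if_pos (mem_SpF.mp hσ).2]
    rw [Finset.sum_congr rfl hc, Finset.sum_const, hkcard, nsmul_eq_mul]
    congr 1
    rw [Nat.cast_sub hl]
    push_cast
    ring
  have e2 : ∑ σ ∈ NSpF l I, (if midp σ ∈ I then (9:ℝ)⁻¹ ^ (l+1) else (9:ℝ)⁻¹ ^ l) * (1/8)
      = ((2:ℝ)^(l+1) - n) * ((9:ℝ)⁻¹ ^ l * (1/8)) := by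
    have hc : ∀ σ ∈ NSpF l I,
        (if midp σ ∈ I then (9:ℝ)⁻¹ ^ (l+1) else (9:ℝ)⁻¹ ^ l) * (1/8)
        = (9:ℝ)⁻¹ ^ l * (1/8) := fun σ hσ => by rw [if_neg (mem_NSpF.mp hσ).2]
    rw [Finset.sum_congr rfl hc, Finset.sum_const, hncard, nsmul_eq_mul]
    congr 1
    have h1 : n - 2^l ≤ 2^l := by omega
    rw [Nat.cast_sub h1, Nat.cast_sub hl]
    push_cast
    ring
  have hsum : ∑ σ ∈ Bls l, (if midp σ ∈ I then (9:ℝ)⁻¹ ^ (l+1) else (9:ℝ)⁻¹ ^ l) * (1/8)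
      = ((n:ℝ) - 2^l) * ((9:ℝ)⁻¹ ^ (l+1) * (1/8))
        + ((2:ℝ)^(l+1) - n) * ((9:ℝ)⁻¹ ^ l * (1/8)) := by
    rw [← hunion, Finset.sum_union hdisj, e1, e2]
  rw [hsum]
  have h18 : (2:ℝ)⁻¹ ^ l * (9:ℝ)⁻¹ ^ l = 1 / 18 ^ l := by
    rw [← mul_pow, one_div, ← inv_pow]
    norm_num
  rw [← h18, pow_succ (9:ℝ)⁻¹ l, pow_succ (2:ℝ) l]
  ring

end
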